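/- Let p be a prime, q = p^e a power of p, ℓ an odd prime different from p, and m a positive integer coprime to q. Let γ₀ be an integer and τ the least positive integer with γ₀·q^τ ≡ γ₀ (mod m), and assume ℓ^{v_ℓ(m)+1} ∣ γ₀. If d₁, d₂ are integers and j is a positive integer such that (γ₀ + d₁·m)·q^j ≡ γ₀ + d₂·m (mod ℓm), then τ divides j and d₂ ≡ d₁·q^j (mod ℓ). In particular, if d₁ and d₂ represent distinct classes of (ℤ/ℓℤ)*/⟨q^τ⟩, then the q-cyclotomic cosets modulo ℓm containing γ₀ + d₁·m and γ₀ + d₂·m are disjoint. -/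

import Mathlib

/-- The `q`-cyclotomic coset modulo `m` containing (the class of) the integer `γ`,
as a subset of `ZMod m`. -/
def cycCoset (q m : ℕ) (γ : ℤ) : Set (ZMod m) :=
  {x | ∃ j : ℕ, x = (γ : ZMod m) * (q : ZMod m) ^ j}

theorem stmt_3 (p e q ℓ m : ℕ) (hp : p.Prime) (he : 0 < e) (hq : q = p ^ e)
    (hℓ : ℓ.Prime) (hℓ2 : ℓ ≠ 2) (hℓp : ℓ ≠ p)
    (hm : 0 < m) (hmq : Nat.Coprime m q)
    (γ₀ : ℤ) (τ : ℕ)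
    (hτ : IsLeast {t : ℕ | 0 < t ∧ γ₀ * (q : ℤ) ^ t ≡ γ₀ [ZMOD (m : ℤ)]} τ)
    (hγ₀ : (ℓ : ℤ) ^ (padicValNat ℓ m + 1) ∣ γ₀) :
    (∀ d₁ d₂ : ℤ, ∀ j : ℕ, 0 < j →
        (γ₀ + d₁ * m) * (q : ℤ) ^ j ≡ γ₀ + d₂ * m [ZMOD ((ℓ * m : ℕ) : ℤ)] →
        τ ∣ j ∧ d₂ ≡ d₁ * (q : ℤ) ^ j [ZMOD (ℓ : ℤ)]) ∧
      (∀ d₁ d₂ : ℤ, ¬ (ℓ : ℤ) ∣ d₁ → ¬ (ℓ : ℤ) ∣ d₂ →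
        (¬ ∃ k : ℕ, d₂ ≡ d₁ * ((q : ℤ) ^ τ) ^ k [ZMOD (ℓ : ℤ)]) →
        Disjoint (cycCoset q (ℓ * m) (γ₀ + d₁ * m)) (cycCoset q (ℓ * m) (γ₀ + d₂ * m))) := by
  obtain ⟨⟨hτpos, hτP⟩, hτmin⟩ := hτ
  -- closure of the congruence set under addition
  have hPadd : ∀ a b : ℕ, γ₀ * (q : ℤ) ^ a ≡ γ₀ [ZMOD (m : ℤ)] →
      γ₀ * (q : ℤ) ^ b ≡ γ₀ [ZMOD (m : ℤ)] → γ₀ * (q : ℤ) ^ (a + b) ≡ γ₀ [ZMOD (m : ℤ)] := by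
    intro a b ha hb
    calc γ₀ * (q : ℤ) ^ (a + b) = (γ₀ * (q : ℤ) ^ a) * (q : ℤ) ^ b := by rw [pow_add]; ring
    _ ≡ γ₀ * (q : ℤ) ^ b [ZMOD (m : ℤ)] := ha.mul_right _
    _ ≡ γ₀ [ZMOD (m : ℤ)] := hb
  have hPmul : ∀ k : ℕ, γ₀ * (q : ℤ) ^ (τ * k) ≡ γ₀ [ZMOD (m : ℤ)] := by
    intro k
    induction k with
    | zero => simp
    | succ n ih =>
      have := hPadd _ _ ih hτP
      rwa [Nat.mul_succ]
  have hdvdτ : ∀ j : ℕ, 0 < j → γ₀ * (q : ℤ) ^ j ≡ γ₀ [ZMOD (m : ℤ)] → τ ∣ j := by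
    intro j hj hPj
    have hPr : γ₀ * (q : ℤ) ^ (j % τ) ≡ γ₀ [ZMOD (m : ℤ)] := by
      have h1 : γ₀ * (q : ℤ) ^ (τ * (j / τ) + j % τ) ≡ γ₀ [ZMOD (m : ℤ)] := by
        rw [Nat.div_add_mod j τ]; exact hPj
      have h3 : γ₀ * (q : ℤ) ^ (τ * (j / τ)) * (q : ℤ) ^ (j % τ) ≡ γ₀ * (q : ℤ) ^ (j % τ)
          [ZMOD (m : ℤ)] := (hPmul (j / τ)).mul_right _
      calc γ₀ * (q : ℤ) ^ (j % τ)
          ≡ γ₀ * (q : ℤ) ^ (τ * (j / τ)) * (q : ℤ) ^ (j % τ) [ZMOD (m : ℤ)] := h3.symm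
        _ = γ₀ * (q : ℤ) ^ (τ * (j / τ) + j % τ) := by rw [pow_add]; ring
        _ ≡ γ₀ [ZMOD (m : ℤ)] := h1
    rcases Nat.eq_zero_or_pos (j % τ) with h0 | hpos
    · exact Nat.dvd_of_mod_eq_zero h0
    · have hle := hτmin ⟨hpos, hPr⟩
      have hlt := Nat.mod_lt j hτpos
      omega
  -- Part 1
  have part1 : ∀ d₁ d₂ : ℤ, ∀ j : ℕ, 0 < j →
      (γ₀ + d₁ * m) * (q : ℤ) ^ j ≡ γ₀ + d₂ * m [ZMOD ((ℓ * m : ℕ) : ℤ)] →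
      τ ∣ j ∧ d₂ ≡ d₁ * (q : ℤ) ^ j [ZMOD (ℓ : ℤ)] := by
    intro d₁ d₂ j hj h
    have hdv : ((ℓ : ℤ) * m) ∣ (γ₀ + d₂ * m) - (γ₀ + d₁ * m) * (q : ℤ) ^ j := by
      have := h.dvd
      push_cast at this
      exact this
    have hm' : (m : ℤ) ∣ γ₀ - γ₀ * (q : ℤ) ^ j := by
      have h1 : (m : ℤ) ∣ (γ₀ + d₂ * m) - (γ₀ + d₁ * m) * (q : ℤ) ^ j :=
        dvd_trans ⟨ℓ, by ring⟩ hdv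
      have h2 : (m : ℤ) ∣ d₂ * m - d₁ * m * (q : ℤ) ^ j := ⟨d₂ - d₁ * (q : ℤ) ^ j, by ring⟩
      have h3 := dvd_sub h1 h2
      rwa [show (γ₀ + d₂ * m - (γ₀ + d₁ * m) * (q : ℤ) ^ j) - (d₂ * m - d₁ * m * (q : ℤ) ^ j) = γ₀ - γ₀ * (q : ℤ) ^ j by ring] at h3
    have hPj : γ₀ * (q : ℤ) ^ j ≡ γ₀ [ZMOD (m : ℤ)] := Int.modEq_iff_dvd.mpr hm'
    refine ⟨hdvdτ j hj hPj, ?_⟩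
    -- ℓ-adic part
    set v := padicValNat ℓ m with hv
    have hm0 : m ≠ 0 := hm.ne'
    have hfac : m.factorization ℓ = v := Nat.factorization_def m hℓ
    have hmeq : m = ℓ ^ v * (m / ℓ ^ v) := by
      have := (Nat.ordProj_mul_ordCompl_eq_self m ℓ).symm
      rwa [hfac] at this
    have hndvd : ¬ (ℓ ∣ m / ℓ ^ v) := by
      have := Nat.not_dvd_ordCompl hℓ hm0
      rwa [hfac] at this
    have hA : (ℓ : ℤ) ^ (v + 1) ∣ γ₀ * ((q : ℤ) ^ j - 1) := hγ₀.mul_right _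
    have hB : (ℓ : ℤ) ^ (v + 1) ∣
        γ₀ * ((q : ℤ) ^ j - 1) + (m : ℤ) * (d₁ * (q : ℤ) ^ j - d₂) := by
      have hd : (ℓ : ℤ) ^ (v + 1) ∣ (ℓ : ℤ) * m := by
        have hdn : ℓ ^ (v + 1) ∣ ℓ * m := by
          rw [pow_succ, mul_comm (ℓ ^ v) ℓ]
          exact Nat.mul_dvd_mul_left ℓ pow_padicValNat_dvd
        exact_mod_cast Int.natCast_dvd_natCast.mpr hdn
      refine dvd_trans hd ?_
      have := dvd_neg.mpr hdv
      convert this using 1; ring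
    have hC : (ℓ : ℤ) ^ (v + 1) ∣ (m : ℤ) * (d₁ * (q : ℤ) ^ j - d₂) := by
      have := dvd_sub hB hA
      rwa [show γ₀ * ((q : ℤ) ^ j - 1) + (m : ℤ) * (d₁ * (q : ℤ) ^ j - d₂) - γ₀ * ((q : ℤ) ^ j - 1) = (m : ℤ) * (d₁ * (q : ℤ) ^ j - d₂) by ring] at this
    have hD : (ℓ : ℤ) ∣ ((m / ℓ ^ v : ℕ) : ℤ) * (d₁ * (q : ℤ) ^ j - d₂) := by
      have hC' : (ℓ : ℤ) ^ v * (ℓ : ℤ) ∣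
          (ℓ : ℤ) ^ v * (((m / ℓ ^ v : ℕ) : ℤ) * (d₁ * (q : ℤ) ^ j - d₂)) := by
        rw [← pow_succ]
        convert hC using 1
        nth_rewrite 2 [hmeq]
        push_cast
        ring
      have hlv : ((ℓ : ℤ) ^ v) ≠ 0 :=
        pow_ne_zero _ (by exact_mod_cast hℓ.pos.ne')
      exact (mul_dvd_mul_iff_left hlv).mp hC'
    have hℓ' : Prime (ℓ : ℤ) := Nat.prime_iff_prime_int.mp hℓ
    rcases hℓ'.dvd_mul.mp hD with h1 | h2
    · exact absurd (Int.natCast_dvd_natCast.mp h1) hndvd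
    · exact Int.modEq_iff_dvd.mpr h2
  refine ⟨part1, ?_⟩
  -- Part 2
  intro d₁ d₂ _ _ hne
  rw [Set.disjoint_left]
  rintro x ⟨j₁, h₁⟩ ⟨j₂, h₂⟩
  have hNZ : NeZero (ℓ * m) := ⟨(Nat.mul_pos hℓ.pos hm).ne'⟩
  have hcopqℓ : Nat.Coprime q ℓ :=
    hq ▸ Nat.Coprime.pow_left e ((Nat.coprime_primes hp hℓ).mpr (fun h => hℓp h.symm))
  have hcop : Nat.Coprime q (ℓ * m) := Nat.Coprime.mul_right hcopqℓ hmq.symm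
  set r := (ℓ * m).totient with hr
  have hrpos : 0 < r := Nat.totient_pos.mpr (Nat.mul_pos hℓ.pos hm)
  have hqr : (q : ZMod (ℓ * m)) ^ r = 1 := by
    have := Nat.ModEq.pow_totient hcop
    have h' := (ZMod.natCast_eq_natCast_iff _ _ _).mpr this
    push_cast at h'
    exact h'
  obtain ⟨N, hN⟩ : ∃ N : ℕ, j₂ + 1 ≤ j₁ + r * N := ⟨j₂ + 1, by nlinarith⟩
  set j := j₁ + r * N - j₂ with hjdef
  have hjpos : 0 < j := by omega
  have hu : IsUnit ((q : ℕ) : ZMod (ℓ * m)) := (ZMod.isUnit_iff_coprime q (ℓ * m)).mpr hcop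
  have key : ((γ₀ + d₁ * m : ℤ) : ZMod (ℓ * m)) * (q : ZMod (ℓ * m)) ^ j
      = ((γ₀ + d₂ * m : ℤ) : ZMod (ℓ * m)) := by
    have hcanc : (((γ₀ + d₁ * m : ℤ) : ZMod (ℓ * m)) * (q : ZMod (ℓ * m)) ^ j)
        * (q : ZMod (ℓ * m)) ^ j₂
        = ((γ₀ + d₂ * m : ℤ) : ZMod (ℓ * m)) * (q : ZMod (ℓ * m)) ^ j₂ := by
      have hexp : j + j₂ = j₁ + r * N := by omega
      calc (((γ₀ + d₁ * m : ℤ) : ZMod (ℓ * m)) * (q : ZMod (ℓ * m)) ^ j)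
          * (q : ZMod (ℓ * m)) ^ j₂
          = ((γ₀ + d₁ * m : ℤ) : ZMod (ℓ * m)) * (q : ZMod (ℓ * m)) ^ (j + j₂) := by
            rw [pow_add]; ring
        _ = (((γ₀ + d₁ * m : ℤ) : ZMod (ℓ * m)) * (q : ZMod (ℓ * m)) ^ j₁)
            * ((q : ZMod (ℓ * m)) ^ r) ^ N := by rw [hexp, pow_add, pow_mul]; ring
        _ = ((γ₀ + d₂ * m : ℤ) : ZMod (ℓ * m)) * (q : ZMod (ℓ * m)) ^ j₂ := by
            rw [hqr, one_pow, mul_one, ← h₁, h₂]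
    have hu2 : IsUnit ((q : ZMod (ℓ * m)) ^ j₂) := hu.pow j₂
    exact hu2.mul_right_cancel hcanc
  have keyZ : (γ₀ + d₁ * m) * (q : ℤ) ^ j ≡ γ₀ + d₂ * m [ZMOD ((ℓ * m : ℕ) : ℤ)] := by
    have : (((γ₀ + d₁ * m) * (q : ℤ) ^ j : ℤ) : ZMod (ℓ * m))
        = ((γ₀ + d₂ * m : ℤ) : ZMod (ℓ * m)) := by push_cast; push_cast at key; linear_combination key
    exact (ZMod.intCast_eq_intCast_iff _ _ _).mp this
  obtain ⟨hτj, hmod⟩ := part1 d₁ d₂ j hjpos keyZ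
  exact hne ⟨j / τ, by rwa [← pow_mul, Nat.mul_div_cancel' hτj]⟩
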